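/- Let g, g' be two expressions of the same asymptotically Schwarzschild metric in two asymptotic coordinate charts x, y on ℝ³ related (after a rigid motion) by y^j = x^j + o₁(|x|⁰), with g_{ij} = (1 + m_x/(2|x|))⁴δ_{ij} + o₁(|x|^{-1}) and g'_{kl} = (1 + m_y/(2|y|))⁴δ_{kl} + o₁(|y|^{-1}). Then m_x = m_y. -/

import Mathlib

open Filter

lemma comp_le_norm (v : EuclideanSpace ℝ (Fin 3)) (k : Fin 3) : |v k| ≤ ‖v‖ := by
  rw [EuclideanSpace.norm_eq]
  have h : |v k| = Real.sqrt (‖v k‖^2) := by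
    rw [Real.sqrt_sq_eq_abs]; simp
  rw [h]
  apply Real.sqrt_le_sqrt
  exact Finset.single_le_sum (f := fun i => ‖v i‖^2) (fun i _ => sq_nonneg _)
    (Finset.mem_univ k)

lemma sum_bound (a : Fin 3 → ℝ) (G : Fin 3 → Fin 3 → ℝ) (ε : ℝ)
    (ha : ∀ k, |a k - (if k = (0:Fin 3) then 1 else 0)| ≤ ε)
    (hG : ∀ k l, |G k l| ≤ 8) (hε : ε ≤ 1) (hε0 : 0 ≤ ε) :
    |(∑ k, ∑ l', a k * a l' * G k l') - G 0 0| ≤ 300 * ε := by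
  have key : ∀ k l' : Fin 3, |a k * a l' * G k l'
      - (if k = (0:Fin 3) then (1:ℝ) else 0) * (if l' = (0:Fin 3) then (1:ℝ) else 0) * G k l'|
      ≤ 24 * ε := by
    intro k l'
    set dk : ℝ := if k = (0:Fin 3) then 1 else 0 with hdk
    set dl : ℝ := if l' = (0:Fin 3) then 1 else 0 with hdl
    have hdk1 : |dk| ≤ 1 := by rw [hdk]; split <;> norm_num
    have hdl1 : |dl| ≤ 1 := by rw [hdl]; split <;> norm_num
    have hak := ha k
    have hal := ha l'
    rw [← hdk] at hak
    rw [← hdl] at hal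
    have h1 : a k * a l' * G k l' - dk * dl * G k l'
        = (dk * (a l' - dl) + (a k - dk) * dl + (a k - dk) * (a l' - dl)) * G k l' := by ring
    rw [h1, abs_mul]
    have h2 : |dk * (a l' - dl) + (a k - dk) * dl + (a k - dk) * (a l' - dl)|
        ≤ 1 * ε + ε * 1 + ε * ε := by
      calc |dk * (a l' - dl) + (a k - dk) * dl + (a k - dk) * (a l' - dl)|
          ≤ |dk * (a l' - dl)| + |(a k - dk) * dl| + |(a k - dk) * (a l' - dl)| := by
            exact (abs_add_le _ _).trans (by gcongr; exact abs_add_le _ _)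
        _ = |dk| * |a l' - dl| + |a k - dk| * |dl| + |a k - dk| * |a l' - dl| := by
            rw [abs_mul, abs_mul, abs_mul]
        _ ≤ 1 * ε + ε * 1 + ε * ε := by
            gcongr <;> first | exact hak | exact hal | exact hdk1 | exact hdl1 |
              exact (abs_nonneg _)
    have h3 := hG k l'
    nlinarith [abs_nonneg (G k l'), abs_nonneg (dk * (a l' - dl) + (a k - dk) * dl + (a k - dk) * (a l' - dl))]
  have expand : (∑ k, ∑ l', a k * a l' * G k l') - G 0 0
      = ∑ k, ∑ l', (a k * a l' * G k l'
        - (if k = (0:Fin 3) then (1:ℝ) else 0) * (if l' = (0:Fin 3) then (1:ℝ) else 0) * G k l') := by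
    simp [Fin.sum_univ_three]
  rw [expand]
  calc |∑ k, ∑ l', (a k * a l' * G k l'
        - (if k = (0:Fin 3) then (1:ℝ) else 0) * (if l' = (0:Fin 3) then (1:ℝ) else 0) * G k l')|
      ≤ ∑ k : Fin 3, ∑ l' : Fin 3, (24 * ε) := by
        refine (Finset.abs_sum_le_sum_abs _ _).trans (Finset.sum_le_sum fun k _ => ?_)
        exact (Finset.abs_sum_le_sum_abs _ _).trans (Finset.sum_le_sum fun l' _ => key k l')
    _ = 216 * ε := by simp [Fin.sum_univ_three]; ring
    _ ≤ 300 * ε := by linarith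

lemma t4_bound (my u v d : ℝ) (h2 : 2 ≤ u) (hmy : 2*|my| ≤ u) (hv : u - 1 ≤ v)
    (huv : |u - v| ≤ d) (hd0 : 0 ≤ d) :
    |u * ((1 + my/(2*v))^4 - (1 + my/(2*u))^4)| ≤ 16 * |my| * d := by
  have hu0 : (0:ℝ) < u := by linarith
  have hv1 : (1:ℝ) ≤ v := by linarith
  have hv0 : (0:ℝ) < v := by linarith
  set A : ℝ := 1 + my/(2*v) with hA
  set B : ℝ := 1 + my/(2*u) with hB
  have hAb : |A| ≤ 2 := by
    rw [hA]
    have h8 : |my/(2*v)| ≤ 1 := by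
      rw [abs_div, abs_of_pos (by linarith : (0:ℝ) < 2*v), div_le_one (by linarith)]
      linarith
    calc |1 + my/(2*v)| ≤ |(1:ℝ)| + |my/(2*v)| := abs_add_le _ _
      _ ≤ 2 := by rw [abs_one]; linarith
  have hBb : |B| ≤ 2 := by
    rw [hB]
    have h8 : |my/(2*u)| ≤ 1 := by
      rw [abs_div, abs_of_pos (by linarith : (0:ℝ) < 2*u), div_le_one (by linarith)]
      linarith
    calc |1 + my/(2*u)| ≤ |(1:ℝ)| + |my/(2*u)| := abs_add_le _ _
      _ ≤ 2 := by rw [abs_one]; linarith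
  have hfac : A^4 - B^4 = (A - B) * ((A + B) * (A^2 + B^2)) := by ring
  have hABd : A - B = my * (u - v) / (2*u*v) := by
    rw [hA, hB]
    field_simp
    ring
  have hABle : |A - B| ≤ |my| * d / (2*u*v) := by
    rw [hABd, abs_div, abs_of_pos (by positivity : (0:ℝ) < 2*u*v), abs_mul]
    gcongr
  have hS : |(A + B) * (A^2 + B^2)| ≤ 32 := by
    rw [abs_mul]
    have h6 : |A + B| ≤ 4 := (abs_add_le _ _).trans (by linarith)
    have h7 : |A^2 + B^2| ≤ 8 := by
      rw [abs_of_nonneg (by positivity)]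
      have hA2 : A^2 ≤ 4 := by nlinarith [abs_le.1 hAb]
      have hB2 : B^2 ≤ 4 := by nlinarith [abs_le.1 hBb]
      linarith
    calc |A + B| * |A^2 + B^2| ≤ 4 * 8 :=
          mul_le_mul h6 h7 (abs_nonneg _) (by norm_num)
      _ = 32 := by norm_num
  calc |u * (A^4 - B^4)| = u * (|A - B| * |(A + B) * (A^2 + B^2)|) := by
        rw [hfac, abs_mul, abs_mul, abs_of_pos hu0]
    _ ≤ u * ((|my| * d / (2*u*v)) * 32) := by gcongr
    _ = 16 * |my| * d / v := by field_simp; ring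
    _ ≤ 16 * |my| * d := div_le_self (by positivity) hv1


/-- Two asymptotically Schwarzschild expressions of the same
metric in charts related (after a rigid motion) by `y = x + o₁(|x|⁰)` have the
same mass: if `g_{ij}(x) = (1+m_x/(2|x|))⁴δ_{ij} + o₁(|x|⁻¹)`,
`g'_{kl}(y) = (1+m_y/(2|y|))⁴δ_{kl} + o₁(|y|⁻¹)` and
`g_{ij}(x) = (∂y^k/∂x^i)(∂y^l/∂x^j) g'_{kl}(y(x))`, then `m_x = m_y`.
Here `o₁(|x|^s)` means `o(|x|^s)` with first derivative `o(|x|^{s-1})`, stated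
along the filter `comap ‖·‖ atTop` (i.e. as `‖x‖ → ∞`). -/
theorem stmt_17 (mx my : ℝ)
    (y : EuclideanSpace ℝ (Fin 3) → EuclideanSpace ℝ (Fin 3))
    (g g' : EuclideanSpace ℝ (Fin 3) → Fin 3 → Fin 3 → ℝ)
    (hyDiff : Differentiable ℝ y)
    -- y x = x + o₁(1):
    (hy0 : Tendsto (fun x : EuclideanSpace ℝ (Fin 3) => ‖y x - x‖)
      (comap norm atTop) (nhds 0))
    (hy1 : Tendsto (fun x : EuclideanSpace ℝ (Fin 3) =>
        ‖x‖ * ‖fderiv ℝ (fun z => y z - z) x‖)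
      (comap norm atTop) (nhds 0))
    -- g_{ij}(x) = (1 + m_x/(2|x|))⁴ δ_{ij} + o₁(|x|⁻¹):
    (hgx0 : ∀ i j, Tendsto (fun x : EuclideanSpace ℝ (Fin 3) =>
        ‖x‖ * |g x i j - (1 + mx/(2*‖x‖))^4 * (if i = j then (1:ℝ) else 0)|)
      (comap norm atTop) (nhds 0))
    (hgx1 : ∀ i j, Tendsto (fun x : EuclideanSpace ℝ (Fin 3) =>
        ‖x‖^2 * ‖fderiv ℝ (fun z => g z i j
          - (1 + mx/(2*‖z‖))^4 * (if i = j then (1:ℝ) else 0)) x‖)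
      (comap norm atTop) (nhds 0))
    -- g'_{kl}(y) = (1 + m_y/(2|y|))⁴ δ_{kl} + o₁(|y|⁻¹):
    (hgy0 : ∀ k l, Tendsto (fun x : EuclideanSpace ℝ (Fin 3) =>
        ‖x‖ * |g' x k l - (1 + my/(2*‖x‖))^4 * (if k = l then (1:ℝ) else 0)|)
      (comap norm atTop) (nhds 0))
    (hgy1 : ∀ k l, Tendsto (fun x : EuclideanSpace ℝ (Fin 3) =>
        ‖x‖^2 * ‖fderiv ℝ (fun z => g' z k l
          - (1 + my/(2*‖z‖))^4 * (if k = l then (1:ℝ) else 0)) x‖)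
      (comap norm atTop) (nhds 0))
    -- the tensor transformation law g_{ij} = (∂y^k/∂x^i)(∂y^l/∂x^j) g'_{kl}∘y:
    (hrel : ∀ (x : EuclideanSpace ℝ (Fin 3)) (i j : Fin 3),
      g x i j = ∑ k, ∑ l,
        (fderiv ℝ y x (EuclideanSpace.single i 1)) k
        * (fderiv ℝ y x (EuclideanSpace.single j 1)) l
        * g' (y x) k l) :
    mx = my := by
  clear hgx1 hgy1
  set l : Filter (EuclideanSpace ℝ (Fin 3)) := comap norm atTop with hldef
  have hnorm : Tendsto (norm : EuclideanSpace ℝ (Fin 3) → ℝ) l atTop := tendsto_comap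
  have hray : Tendsto (fun t : ℝ =>
      t • (EuclideanSpace.single 0 1 : EuclideanSpace ℝ (Fin 3))) atTop l := by
    rw [hldef, tendsto_comap_iff]
    have he : (norm ∘ fun t : ℝ =>
        t • (EuclideanSpace.single (0:Fin 3) (1:ℝ) : EuclideanSpace ℝ (Fin 3)))
        = fun t : ℝ => |t| := by
      ext t
      simp [Function.comp, norm_smul, EuclideanSpace.norm_single]
    rw [he]
    exact tendsto_abs_atTop_atTop
  haveI hlne : l.NeBot := hray.neBot
  have hev : ∀ c : ℝ, ∀ᶠ x in l, c ≤ ‖x‖ := fun c => hnorm.eventually_ge_atTop c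
  have hd1 : ∀ᶠ x in l, ‖y x - x‖ ≤ 1 :=
    (hy0.eventually_lt_const one_pos).mono fun x hx => hx.le
  have hylow : ∀ᶠ x in l, ‖x‖ - 1 ≤ ‖y x‖ := by
    filter_upwards [hd1] with x hx
    have h1 : ‖x‖ ≤ ‖y x‖ + ‖y x - x‖ := by
      calc ‖x‖ = ‖y x - (y x - x)‖ := by rw [sub_sub_cancel]
        _ ≤ ‖y x‖ + ‖y x - x‖ := norm_sub_le _ _
    linarith
  have hynorm : Tendsto (fun x => ‖y x‖) l atTop := by
    refine tendsto_atTop_mono' l hylow ?_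
    simpa [sub_eq_add_neg] using tendsto_atTop_add_const_right l (-1) hnorm
  have hyl : Tendsto y l l := by
    rw [hldef, tendsto_comap_iff]
    exact hynorm
  -- bound on g' near infinity
  have hGb : ∀ k l', ∀ᶠ z in l, |g' z k l'| ≤ 8 := by
    intro k l'
    filter_upwards [(hgy0 k l').eventually_lt_const one_pos, hev 1, hev (2*|my|)]
      with z h1 h2 h3
    have hz0 : (0:ℝ) < ‖z‖ := lt_of_lt_of_le one_pos h2
    set s : ℝ := (1 + my/(2*‖z‖))^4 * (if k = l' then (1:ℝ) else 0) with hs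
    have hdiff : |g' z k l' - s| ≤ 1 := by
      have h4 : |g' z k l' - s| ≤ ‖z‖ * |g' z k l' - s| :=
        le_mul_of_one_le_left (abs_nonneg _) h2
      linarith
    have hq : |my/(2*‖z‖)| ≤ 1/2 := by
      rw [abs_div, abs_of_pos (by linarith : (0:ℝ) < 2*‖z‖), div_le_iff₀ (by linarith)]
      have : |my| ≤ ‖z‖ := by
        have := abs_nonneg my
        linarith
      linarith
    have h14 : |(1 + my/(2*‖z‖))^4| ≤ 6 := by
      rw [abs_pow]
      have : |1 + my/(2*‖z‖)| ≤ 3/2 :=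
        (abs_add_le _ _).trans (by rw [abs_one]; linarith)
      calc |1 + my/(2*‖z‖)|^4 ≤ (3/2)^4 := by
            exact pow_le_pow_left₀ (abs_nonneg _) this 4
        _ ≤ 6 := by norm_num
    have hsb : |s| ≤ 6 := by
      rw [hs]
      split_ifs
      · rw [mul_one]; exact h14
      · simp
    have hgs : g' z k l' - s + s = g' z k l' := by ring
    calc |g' z k l'| = |(g' z k l' - s) + s| := by rw [hgs]
      _ ≤ |g' z k l' - s| + |s| := abs_add_le _ _
      _ ≤ 8 := by linarith
  have hGall : ∀ᶠ x in l, ∀ k l' : Fin 3, |g' (y x) k l'| ≤ 8 :=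
    eventually_all.2 fun k => eventually_all.2 fun l' => hyl.eventually (hGb k l')
  -- fderiv decomposition
  have hfd : ∀ (x v : EuclideanSpace ℝ (Fin 3)),
      fderiv ℝ y x v = fderiv ℝ (fun z => y z - z) x v + v := by
    intro x v
    have h : fderiv ℝ (fun z => y z - z) x
        = fderiv ℝ y x - fderiv ℝ (fun z : EuclideanSpace ℝ (Fin 3) => z) x :=
      fderiv_fun_sub (hyDiff x) differentiableAt_fun_id
    rw [h, fderiv_fun_id]
    simp
  have hε1 : ∀ᶠ x in l, ‖fderiv ℝ (fun z => y z - z) x‖ ≤ 1 := by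
    filter_upwards [hy1.eventually_lt_const one_pos, hev 1] with x h1 h2
    have h3 : ‖fderiv ℝ (fun z => y z - z) x‖ ≤ ‖x‖ * ‖fderiv ℝ (fun z => y z - z) x‖ :=
      le_mul_of_one_le_left (norm_nonneg _) h2
    linarith
  -- Term 2
  have hT2 : Tendsto (fun x => ‖x‖ * (g x 0 0 - g' (y x) 0 0)) l (nhds 0) := by
    apply squeeze_zero_norm' (a := fun x => 300 * (‖x‖ * ‖fderiv ℝ (fun z => y z - z) x‖))
    · filter_upwards [hGall, hε1] with x hG8 hε
      have ha : ∀ k : Fin 3, |(fun k => (fderiv ℝ y x (EuclideanSpace.single (0:Fin 3) 1)) k) k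
          - (if k = (0:Fin 3) then 1 else 0)| ≤ ‖fderiv ℝ (fun z => y z - z) x‖ := by
        intro k
        have h1 : (fderiv ℝ y x (EuclideanSpace.single (0:Fin 3) 1)) k
            - (if k = (0:Fin 3) then 1 else 0)
            = (fderiv ℝ (fun z => y z - z) x (EuclideanSpace.single (0:Fin 3) 1)) k := by
          rw [hfd]
          have : (EuclideanSpace.single (0:Fin 3) (1:ℝ)) k
              = (if k = (0:Fin 3) then 1 else 0) := by
            simp [EuclideanSpace.single_apply]
          simp only [PiLp.add_apply]
          rw [this]; ring
        simp only [h1]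
        calc |(fderiv ℝ (fun z => y z - z) x (EuclideanSpace.single (0:Fin 3) 1)) k|
            ≤ ‖fderiv ℝ (fun z => y z - z) x (EuclideanSpace.single (0:Fin 3) 1)‖ :=
              comp_le_norm _ _
          _ ≤ ‖fderiv ℝ (fun z => y z - z) x‖ * ‖EuclideanSpace.single (0:Fin 3) (1:ℝ)‖ :=
              ContinuousLinearMap.le_opNorm _ _
          _ = ‖fderiv ℝ (fun z => y z - z) x‖ := by
              rw [EuclideanSpace.norm_single]; simp
      have key := sum_bound (fun k => (fderiv ℝ y x (EuclideanSpace.single (0:Fin 3) 1)) k)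
        (fun k l' => g' (y x) k l') (‖fderiv ℝ (fun z => y z - z) x‖) ha
        (fun k l' => hG8 k l') hε (norm_nonneg _)
      rw [Real.norm_eq_abs, abs_mul, abs_of_nonneg (norm_nonneg x)]
      rw [hrel x 0 0]
      calc ‖x‖ * |(∑ k, ∑ l', (fderiv ℝ y x (EuclideanSpace.single (0:Fin 3) 1)) k
              * (fderiv ℝ y x (EuclideanSpace.single (0:Fin 3) 1)) l' * g' (y x) k l')
            - g' (y x) 0 0|
          ≤ ‖x‖ * (300 * ‖fderiv ℝ (fun z => y z - z) x‖) := by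
            exact mul_le_mul_of_nonneg_left key (norm_nonneg x)
        _ = 300 * (‖x‖ * ‖fderiv ℝ (fun z => y z - z) x‖) := by ring
    · simpa using hy1.const_mul (300:ℝ)
  -- Term 1
  have hgx00 : Tendsto (fun x : EuclideanSpace ℝ (Fin 3) =>
      ‖x‖ * |g x 0 0 - (1 + mx/(2*‖x‖))^4|) l (nhds 0) := by
    simpa using hgx0 0 0
  have hT1 : Tendsto (fun x => ‖x‖ * ((1 + mx/(2*‖x‖))^4 - g x 0 0)) l (nhds 0) := by
    apply squeeze_zero_norm' (a := fun x =>
      ‖x‖ * |g x 0 0 - (1 + mx/(2*‖x‖))^4|)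
    · refine Eventually.of_forall fun x => le_of_eq ?_
      rw [Real.norm_eq_abs, abs_mul, abs_of_nonneg (norm_nonneg x), abs_sub_comm]
    · exact hgx00
  -- Term 3
  have hT3 : Tendsto (fun x => ‖x‖ * (g' (y x) 0 0 - (1 + my/(2*‖y x‖))^4)) l (nhds 0) := by
    have hH : Tendsto (fun x => ‖y x‖ * |g' (y x) 0 0 - (1 + my/(2*‖y x‖))^4|) l
        (nhds 0) := by
      simpa [Function.comp_def] using (hgy0 0 0).comp hyl
    apply squeeze_zero_norm' (a := fun x => 2 * (‖y x‖
      * |g' (y x) 0 0 - (1 + my/(2*‖y x‖))^4|))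
    · filter_upwards [hylow, hev 2] with x hv h2
      rw [Real.norm_eq_abs, abs_mul, abs_of_nonneg (norm_nonneg x)]
      have hx2 : ‖x‖ ≤ 2 * ‖y x‖ := by linarith
      calc ‖x‖ * |g' (y x) 0 0 - (1 + my/(2*‖y x‖))^4|
          ≤ (2 * ‖y x‖) * |g' (y x) 0 0 - (1 + my/(2*‖y x‖))^4| :=
            mul_le_mul_of_nonneg_right hx2 (abs_nonneg _)
        _ = 2 * (‖y x‖ * |g' (y x) 0 0 - (1 + my/(2*‖y x‖))^4|) := by ring
    · simpa using hH.const_mul (2:ℝ)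
  -- Term 4
  have hT4 : Tendsto (fun x => ‖x‖ * ((1 + my/(2*‖y x‖))^4 - (1 + my/(2*‖x‖))^4)) l
      (nhds 0) := by
    apply squeeze_zero_norm' (a := fun x => 16 * |my| * ‖y x - x‖)
    · filter_upwards [hylow, hev 2, hev (2*|my|), hd1] with x hv h2 hmy hd
      have huv : |‖x‖ - ‖y x‖| ≤ ‖y x - x‖ := by
        have h5 : |‖x‖ - ‖y x‖| ≤ ‖x - y x‖ := abs_norm_sub_norm_le _ _
        rw [norm_sub_rev] at h5
        exact h5
      rw [Real.norm_eq_abs]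
      exact t4_bound my ‖x‖ ‖y x‖ ‖y x - x‖ h2 hmy hv huv (norm_nonneg _)
    · simpa using hy0.const_mul (16 * abs my)
  -- combine
  have hsum : Tendsto (fun x => ‖x‖ * ((1 + mx/(2*‖x‖))^4 - (1 + my/(2*‖x‖))^4)) l
      (nhds 0) := by
    have hcomb := ((hT1.add hT2).add hT3).add hT4
    simp only [add_zero] at hcomb
    refine Tendsto.congr (fun x => ?_) hcomb
    ring
  -- second limit
  have htinv : Tendsto (fun x : EuclideanSpace ℝ (Fin 3) => (‖x‖)⁻¹) l (nhds 0) :=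
    hnorm.inv_tendsto_atTop
  have hGcont : Continuous fun t : ℝ => 2*(mx - my) + (3/2)*(mx^2 - my^2)*t
      + (1/2)*(mx^3 - my^3)*t^2 + (1/16)*(mx^4 - my^4)*t^3 := by fun_prop
  have hGlim : Tendsto (fun t : ℝ => 2*(mx - my) + (3/2)*(mx^2 - my^2)*t
      + (1/2)*(mx^3 - my^3)*t^2 + (1/16)*(mx^4 - my^4)*t^3) (nhds 0)
      (nhds (2*(mx - my))) := by
    have := hGcont.tendsto 0
    convert this using 2
    norm_num
  have hsum2 : Tendsto (fun x => ‖x‖ * ((1 + mx/(2*‖x‖))^4 - (1 + my/(2*‖x‖))^4)) l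
      (nhds (2*(mx - my))) := by
    have hcomp := hGlim.comp htinv
    refine hcomp.congr' ?_
    filter_upwards [hev 1] with x h1
    have hx0 : ‖x‖ ≠ 0 := ne_of_gt (lt_of_lt_of_le one_pos h1)
    simp only [Function.comp]
    field_simp
    ring
  have hfin : (0:ℝ) = 2*(mx - my) := tendsto_nhds_unique hsum hsum2
  linarith
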